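/- Let (I,μ) be a marked ideal of maximal order with μ > 1, i.e. D^μ(I) = (1). Then the homogenized ideal of the derivative contains the derivative of the homogenized ideal: D(H(I,μ)) ⊆ H(D(I,μ)), where H(J,ν) := Σ_{i=0}^{ν−1} D^i(J)·(D^{ν−1}(J))^i for a marked ideal (J,ν). -/

import Mathlib

open MvPolynomial

/-- The first derivative ideal: generated by `I` and all first partial derivatives of
elements of `I`. -/
noncomputable def derivIdeal {K : Type*} [CommRing K] {n : ℕ}
    (I : Ideal (MvPolynomial (Fin n) K)) : Ideal (MvPolynomial (Fin n) K) :=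
  I ⊔ Ideal.span {g | ∃ f ∈ I, ∃ i : Fin n, g = pderiv i f}

/-- The `k`-th iterated derivative ideal. -/
noncomputable def derivIdealIter {K : Type*} [CommRing K] {n : ℕ} (k : ℕ)
    (I : Ideal (MvPolynomial (Fin n) K)) : Ideal (MvPolynomial (Fin n) K) :=
  derivIdeal^[k] I

/-- The homogenization `H(J,ν) = Σ_{i=0}^{ν−1} D^i(J)·(D^{ν−1}(J))^i` of a marked ideal
`(J,ν)`. -/
noncomputable def homog {K : Type*} [CommRing K] {n : ℕ} (ν : ℕ)
    (J : Ideal (MvPolynomial (Fin n) K)) : Ideal (MvPolynomial (Fin n) K) :=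
  ∑ i ∈ Finset.range ν, derivIdealIter i J * derivIdealIter (ν - 1) J ^ i

section Aux
variable {K : Type*} [CommRing K] {n : ℕ}

lemma le_derivIdeal (I : Ideal (MvPolynomial (Fin n) K)) : I ≤ derivIdeal I := le_sup_left

lemma pderiv_mem_derivIdeal {I : Ideal (MvPolynomial (Fin n) K)} {f : MvPolynomial (Fin n) K}
    (hf : f ∈ I) (i : Fin n) : pderiv i f ∈ derivIdeal I :=
  (le_sup_right : _ ≤ derivIdeal I) (Ideal.subset_span ⟨f, hf, i, rfl⟩)

lemma derivIdeal_le {I J : Ideal (MvPolynomial (Fin n) K)} (h1 : I ≤ J)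
    (h2 : ∀ f ∈ I, ∀ i : Fin n, pderiv i f ∈ J) : derivIdeal I ≤ J := by
  apply sup_le h1
  rw [Ideal.span_le]
  rintro g ⟨f, hf, i, rfl⟩
  exact h2 f hf i

lemma derivIdeal_top : derivIdeal (⊤ : Ideal (MvPolynomial (Fin n) K)) = ⊤ :=
  top_le_iff.mp (le_derivIdeal ⊤)

lemma derivIdealIter_succ' (k : ℕ) (I : Ideal (MvPolynomial (Fin n) K)) :
    derivIdealIter (k + 1) I = derivIdeal (derivIdealIter k I) :=
  Function.iterate_succ_apply' _ _ _

lemma derivIdealIter_succ (k : ℕ) (I : Ideal (MvPolynomial (Fin n) K)) :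
    derivIdealIter (k + 1) I = derivIdealIter k (derivIdeal I) :=
  Function.iterate_succ_apply _ _ _

lemma derivIdeal_mul_le (A B : Ideal (MvPolynomial (Fin n) K)) :
    derivIdeal (A * B) ≤ derivIdeal A * B + A * derivIdeal B := by
  apply derivIdeal_le
  · exact le_trans (Ideal.mul_mono_left (le_derivIdeal A)) le_sup_left
  · intro f hf i
    refine Submodule.mul_induction_on hf ?_ ?_
    · intro a ha b hb
      rw [pderiv_mul]
      exact add_mem (Submodule.mem_sup_left
          (Ideal.mul_mem_mul (pderiv_mem_derivIdeal ha i) hb))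
        (Submodule.mem_sup_right (Ideal.mul_mem_mul ha (pderiv_mem_derivIdeal hb i)))
    · intro x y hx hy
      rw [map_add]
      exact add_mem hx hy

lemma derivIdeal_pow_le {T : Ideal (MvPolynomial (Fin n) K)} (hT : derivIdeal T = ⊤) (k : ℕ) :
    derivIdeal (T ^ (k + 1)) ≤ T ^ k := by
  induction k with
  | zero => simp [pow_zero, Ideal.one_eq_top]
  | succ k ih =>
      have : T ^ (k + 2) = T * T ^ (k + 1) := by ring
      rw [this]
      calc derivIdeal (T * T ^ (k + 1))
          ≤ derivIdeal T * T ^ (k + 1) + T * derivIdeal (T ^ (k + 1)) := derivIdeal_mul_le _ _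
        _ ≤ ⊤ * T ^ (k + 1) + T * T ^ k := by
            gcongr <;> simp [hT, ih]
        _ ≤ T ^ (k + 1) := by
            rw [← Ideal.one_eq_top, one_mul, ← pow_succ']
            exact sup_le le_rfl le_rfl

lemma ideal_sum_le {ι : Type*} {s : Finset ι} {f : ι → Ideal (MvPolynomial (Fin n) K)}
    {G : Ideal (MvPolynomial (Fin n) K)} (h : ∀ i ∈ s, f i ≤ G) : (∑ i ∈ s, f i) ≤ G := by
  classical
  induction s using Finset.induction with
  | empty => simpa using bot_le
  | insert _ _ hx ih =>
      rw [Finset.sum_insert hx]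
      exact sup_le (h _ (Finset.mem_insert_self _ _))
        (ih fun i hi => h i (Finset.mem_insert_of_mem hi))

lemma ideal_le_sum {ι : Type*} {s : Finset ι} (f : ι → Ideal (MvPolynomial (Fin n) K))
    {j : ι} (hj : j ∈ s) : f j ≤ ∑ i ∈ s, f i := by
  classical
  rw [← Finset.add_sum_erase _ _ hj]
  exact le_sup_left

lemma derivIdeal_add_le (A B : Ideal (MvPolynomial (Fin n) K)) :
    derivIdeal (A + B) ≤ derivIdeal A + derivIdeal B := by
  apply derivIdeal_le
  · exact add_le_add (le_derivIdeal A) (le_derivIdeal B)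
  · intro f hf i
    rw [Submodule.add_eq_sup, Submodule.mem_sup] at hf
    obtain ⟨a, ha, b, hb, rfl⟩ := hf
    rw [map_add]
    exact add_mem (Submodule.mem_sup_left (pderiv_mem_derivIdeal ha i))
      (Submodule.mem_sup_right (pderiv_mem_derivIdeal hb i))

lemma derivIdeal_sum_le {ι : Type*} {s : Finset ι} (f : ι → Ideal (MvPolynomial (Fin n) K)) :
    derivIdeal (∑ i ∈ s, f i) ≤ ∑ i ∈ s, derivIdeal (f i) := by
  classical
  induction s using Finset.induction with
  | empty =>
      simp only [Finset.sum_empty]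
      apply derivIdeal_le le_rfl
      intro g hg i
      simp only [Ideal.zero_eq_bot, Ideal.mem_bot] at hg ⊢
      simp [hg]
  | insert _ _ hx ih =>
      rw [Finset.sum_insert hx, Finset.sum_insert hx]
      exact le_trans (derivIdeal_add_le _ _) (add_le_add le_rfl ih)

end Aux


/-- For a marked ideal `(I,μ)` of maximal order with `μ > 1`, the derivative of the
homogenized ideal is contained in the homogenized ideal of the derivative:
`D(H(I,μ)) ⊆ H(D(I,μ)) = H(D(I), μ−1)`. -/
theorem stmt_9 {K : Type*} [Field K] [CharZero K] {n : ℕ}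
    (I : Ideal (MvPolynomial (Fin n) K)) (μ : ℕ) (hμ : 1 < μ)
    (hmax : derivIdealIter μ I = ⊤) :
    derivIdeal (homog μ I) ≤ homog (μ - 1) (derivIdeal I) := by
  have hμ2 : μ - 1 + 1 = μ := by omega
  set T := derivIdealIter (μ - 1) I with hTdef
  have hDT : derivIdeal T = ⊤ := by
    rw [hTdef, ← derivIdealIter_succ', hμ2, hmax]
  have hT2 : derivIdealIter (μ - 1 - 1) (derivIdeal I) = T := by
    rw [hTdef, ← derivIdealIter_succ]
    congr 1
    omega
  have hterm : ∀ j, derivIdealIter j (derivIdeal I) *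
      derivIdealIter (μ - 1 - 1) (derivIdeal I) ^ j = derivIdealIter (j + 1) I * T ^ j := by
    intro j
    rw [hT2, derivIdealIter_succ]
  have hsum : homog (μ - 1) (derivIdeal I)
      = ∑ j ∈ Finset.range (μ - 1), derivIdealIter (j + 1) I * T ^ j := by
    rw [homog]
    exact Finset.sum_congr rfl fun j _ => hterm j
  have hmem : ∀ j ∈ Finset.range (μ - 1),
      derivIdealIter (j + 1) I * T ^ j ≤ homog (μ - 1) (derivIdeal I) := by
    intro j hj
    rw [hsum]
    exact ideal_le_sum (fun j => derivIdealIter (j + 1) I * T ^ j) hj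
  have key : ∀ j, j + 1 ≤ μ →
      derivIdealIter (j + 1) I * T ^ j ≤ homog (μ - 1) (derivIdeal I) := by
    intro j hj
    rcases lt_or_eq_of_le hj with h | h
    · exact hmem j (Finset.mem_range.mpr (by omega))
    · have hj1 : j = μ - 1 := by omega
      subst hj1
      have htop : derivIdealIter (μ - 1 + 1) I = ⊤ := by rw [hμ2, hmax]
      rw [htop, ← Ideal.one_eq_top, one_mul]
      have hpow : T ^ (μ - 1) = T * T ^ (μ - 2) := by
        rw [← pow_succ']
        congr 1
        omega
      have he : derivIdealIter (μ - 2 + 1) I = T := by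
        rw [hTdef]
        congr 1
        omega
      calc T ^ (μ - 1) = derivIdealIter (μ - 2 + 1) I * T ^ (μ - 2) := by rw [he, ← hpow]
        _ ≤ homog (μ - 1) (derivIdeal I) := hmem _ (Finset.mem_range.mpr (by omega))
  calc derivIdeal (homog μ I)
      ≤ ∑ i ∈ Finset.range μ, derivIdeal (derivIdealIter i I * T ^ i) := by
        rw [homog, ← hTdef]
        exact derivIdeal_sum_le _
    _ ≤ homog (μ - 1) (derivIdeal I) := by
        apply ideal_sum_le
        intro i hi
        rw [Finset.mem_range] at hi
        refine le_trans (derivIdeal_mul_le _ _) ?_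
        rw [Submodule.add_eq_sup]
        refine sup_le ?_ ?_
        · rw [← derivIdealIter_succ']
          exact key i (by omega)
        · match i with
          | 0 =>
              rw [pow_zero, Ideal.one_eq_top, derivIdeal_top, Ideal.mul_top]
              refine le_trans ?_ (key 0 (by omega))
              rw [pow_zero, mul_one, derivIdealIter_succ']
              exact le_derivIdeal _
          | (k + 1) =>
              refine le_trans (Ideal.mul_mono_right (derivIdeal_pow_le hDT k)) ?_
              exact key k (by omega)
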